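/- Let Δ be a simplicial tree and let M and N be two distinct k-matchings of Δ. Set M̂ = M \ N and N̂ = N \ M (so M̂ and N̂ have the same cardinality). Then the bipartite graph B_(M,N) on vertex set M̂ ⊔ N̂, whose edges are exactly the pairs {F, G} with F ∈ M̂, G ∈ N̂ and F ∩ G ≠ ∅, contains no cycle. -/

import Mathlib

open scoped Classical
open Finset

variable {V : Type*}

/-- `F` is a leaf of the collection of facets `Γ`. -/
def IsLeafIn (Γ : Finset (Finset V)) (F : Finset V) : Prop :=
  F ∈ Γ ∧ (Γ = {F} ∨ ∃ G ∈ Γ, G ≠ F ∧ ∀ H ∈ Γ, H ≠ F → F ∩ H ⊆ F ∩ G)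

/-- A simplicial tree, given by its finite set of facets: the facets are nonempty and
pairwise incomparable, every nonempty subcollection has a leaf, and the complex is
connected (any two facets are joined by a chain of facets in which consecutive facets
intersect). -/
def IsSimplicialTree (Δ : Finset (Finset V)) : Prop :=
  (∀ F ∈ Δ, F.Nonempty) ∧
  (∀ F ∈ Δ, ∀ G ∈ Δ, F ⊆ G → F = G) ∧
  (∀ Γ : Finset (Finset V), Γ ⊆ Δ → Γ.Nonempty → ∃ F, IsLeafIn Γ F) ∧
  (∀ F ∈ Δ, ∀ G ∈ Δ,
    Relation.ReflTransGen (fun A B => A ∈ Δ ∧ B ∈ Δ ∧ (A ∩ B).Nonempty) F G)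

/-- A `k`-matching of `Δ`: a set of `k` pairwise disjoint facets of `Δ`. -/
def IsDeltaMatching (Δ : Finset (Finset V)) (k : ℕ) (M : Finset (Finset V)) : Prop :=
  M ⊆ Δ ∧ M.card = k ∧ ∀ F ∈ M, ∀ G ∈ M, F ≠ G → Disjoint F G

lemma walk_support_getElem {W : Type*} {G : SimpleGraph W} {u v : W} (p : G.Walk u v) :
    ∀ (i : ℕ) (h : i < p.support.length), p.support[i] = p.getVert i := by
  induction p with
  | nil => intro i h; simp at h; simp [h]
  | cons hadj q ih =>
    intro i h
    cases i with
    | zero => simp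
    | succ i =>
      simp only [SimpleGraph.Walk.support_cons] at h ⊢
      rw [List.getElem_cons_succ]
      rw [ih i (by simpa [SimpleGraph.Walk.length_support] using
        (by simp [SimpleGraph.Walk.length_support, SimpleGraph.Walk.length_cons] at h; omega :
          i < q.length + 1))]
      simp [SimpleGraph.Walk.getVert_cons_succ]

lemma matching_aux {V : Type*} [DecidableEq V] (A B : Finset (Finset V))
    (hA : ∀ F ∈ A, ∀ G ∈ A, F ≠ G → Disjoint F G)
    (hB : ∀ F ∈ B, ∀ G ∈ B, F ≠ G → Disjoint F G)
    (F H₁ H₂ G₀ : Finset V) (hF : F ∈ A) (h1 : H₁ ∈ B) (h2 : H₂ ∈ B)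
    (h12 : H₁ ≠ H₂) (hi1 : (F ∩ H₁).Nonempty) (hi2 : (F ∩ H₂).Nonempty)
    (hG : G₀ ∈ A ∨ G₀ ∈ B) (hGF : G₀ ≠ F)
    (hs1 : F ∩ H₁ ⊆ F ∩ G₀) (hs2 : F ∩ H₂ ⊆ F ∩ G₀) : False := by
  obtain ⟨x, hx⟩ := hi1
  obtain ⟨y, hy⟩ := hi2
  rcases hG with hGA | hGB
  · have hd := hA F hF G₀ hGA (Ne.symm hGF)
    exact (Finset.disjoint_left.mp hd (Finset.mem_inter.mp hx).1
      (Finset.mem_inter.mp (hs1 hx)).2)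
  · have e1 : G₀ = H₁ := by
      by_contra hne
      have hd := hB G₀ hGB H₁ h1 hne
      exact Finset.disjoint_left.mp hd (Finset.mem_inter.mp (hs1 hx)).2
        (Finset.mem_inter.mp hx).2
    have e2 : G₀ = H₂ := by
      by_contra hne
      have hd := hB G₀ hGB H₂ h2 hne
      exact Finset.disjoint_left.mp hd (Finset.mem_inter.mp (hs2 hy)).2
        (Finset.mem_inter.mp hy).2
    exact h12 (e1 ▸ e2)

/-- Lemma 3.3: for two distinct `k`-matchings `M`, `N` of a simplicial tree `Δ`, the
bipartite graph on `M̂ = M \ N` and `N̂ = N \ M` whose edges are the pairs `{F, G}` with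
`F ∈ M̂`, `G ∈ N̂` and `F ∩ G ≠ ∅` is acyclic. -/
theorem bipartite_graph_of_two_matchings_acyclic
    (Δ : Finset (Finset V)) (hΔ : IsSimplicialTree Δ) (k : ℕ)
    (M N : Finset (Finset V))
    (hM : IsDeltaMatching Δ k M) (hN : IsDeltaMatching Δ k N) (hMN : M ≠ N) :
    (SimpleGraph.fromRel (fun F G : Finset V =>
      F ∈ M \ N ∧ G ∈ N \ M ∧ (F ∩ G).Nonempty)).IsAcyclic := by
  classical
  intro v c hc
  -- every vertex on the support is in M\N or N\M
  have hside : ∀ u ∈ c.support, u ∈ M \ N ∨ u ∈ N \ M := by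
    intro u hu
    have hc' := hc.rotate hu
    have hadj := SimpleGraph.Walk.adj_snd hc'.not_nil
    rw [SimpleGraph.fromRel_adj] at hadj
    rcases hadj.2 with ⟨h1, _⟩ | ⟨_, h2, _⟩
    · exact Or.inl h1
    · exact Or.inr h2
  set Γ : Finset (Finset V) := c.support.toFinset with hΓ
  have hΓΔ : Γ ⊆ Δ := by
    intro u hu
    rw [hΓ, List.mem_toFinset] at hu
    rcases hside u hu with h | h
    · exact hM.1 (Finset.mem_sdiff.mp h).1
    · exact hN.1 (Finset.mem_sdiff.mp h).1
  have hΓne : Γ.Nonempty := ⟨v, by simp [hΓ]⟩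
  obtain ⟨F, hFΓ, hleaf⟩ := hΔ.2.2.1 Γ hΓΔ hΓne
  have hFsup : F ∈ c.support := by rwa [hΓ, List.mem_toFinset] at hFΓ
  set c' := c.rotate F hFsup with hc'def
  have hc' : c'.IsCycle := hc.rotate hFsup
  have hlen : 3 ≤ c'.length := hc'.three_le_length
  set H₁ := c'.getVert 1 with hH₁
  set H₂ := c'.getVert (c'.length - 1) with hH₂
  have hadj1 : (SimpleGraph.fromRel fun F G : Finset V =>
      F ∈ M \ N ∧ G ∈ N \ M ∧ (F ∩ G).Nonempty).Adj F H₁ :=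
    SimpleGraph.Walk.adj_snd hc'.not_nil
  have hadj2 : (SimpleGraph.fromRel fun F G : Finset V =>
      F ∈ M \ N ∧ G ∈ N \ M ∧ (F ∩ G).Nonempty).Adj H₂ F := by
    have := c'.adj_getVert_succ (i := c'.length - 1) (by omega)
    rwa [show c'.length - 1 + 1 = c'.length by omega,
      SimpleGraph.Walk.getVert_length] at this
  -- membership of c'.support in c.support
  have hsub : ∀ u ∈ c'.support, u ∈ c.support := by
    intro u hu
    rw [SimpleGraph.Walk.support_eq_cons c'] at hu
    rcases List.mem_cons.mp hu with h | h
    · exact h ▸ hFsup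
    · have := (SimpleGraph.Walk.support_rotate c F hFsup).mem_iff.mp h
      rw [SimpleGraph.Walk.support_eq_cons c]
      exact List.mem_cons_of_mem _ this
  have hmemsup : ∀ (i : ℕ), i ≤ c'.length → c'.getVert i ∈ c.support := by
    intro i hi
    exact hsub _ (SimpleGraph.Walk.mem_support_iff_exists_getVert.mpr ⟨i, rfl, hi⟩)
  have hH₁Γ : H₁ ∈ Γ := by rw [hΓ, List.mem_toFinset]; exact hmemsup 1 (by omega)
  have hH₂Γ : H₂ ∈ Γ := by
    rw [hΓ, List.mem_toFinset]; exact hmemsup (c'.length - 1) (by omega)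
  have hne12 : H₁ ≠ H₂ := by
    intro h
    have hnd : c'.support.tail.Nodup := hc'.support_nodup
    have hlt : c'.support.tail.length = c'.length := by
      rw [List.length_tail, SimpleGraph.Walk.length_support]; omega
    have e1 : c'.support.tail[0]'(by omega) = H₁ := by
      rw [List.getElem_tail, walk_support_getElem]
    have e2 : c'.support.tail[c'.length - 2]'(by omega) = H₂ := by
      rw [List.getElem_tail, walk_support_getElem]
      congr 1
      omega
    have := (List.Nodup.getElem_inj_iff hnd (hi := by omega) (hj := by omega)
      (i := 0) (j := c'.length - 2)).mp (by rw [e1, e2, h])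
    omega
  have hH₁F : H₁ ≠ F := hadj1.ne'
  have hH₂F : H₂ ≠ F := hadj2.ne
  -- extract leaf neighbor
  rcases hleaf with hsingle | ⟨G₀, hG₀Γ, hG₀F, hsubs⟩
  · exact hH₁F (by simpa [hsingle] using hH₁Γ)
  · have hG₀sup : G₀ ∈ c.support := by rwa [hΓ, List.mem_toFinset] at hG₀Γ
    have hs1 := hsubs H₁ hH₁Γ hH₁F
    have hs2 := hsubs H₂ hH₂Γ hH₂F
    rw [SimpleGraph.fromRel_adj] at hadj1 hadj2
    rcases hside F hFsup with hFM | hFN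
    · -- F ∈ M \ N
      have hFnotN : F ∉ N \ M := fun h =>
        (Finset.mem_sdiff.mp h).2 (Finset.mem_sdiff.mp hFM).1
      have h1 : H₁ ∈ N \ M ∧ (F ∩ H₁).Nonempty := by
        rcases hadj1.2 with ⟨_, h, hnonempty⟩ | ⟨_, h, _⟩
        · exact ⟨h, hnonempty⟩
        · exact absurd h hFnotN
      have h2 : H₂ ∈ N \ M ∧ (F ∩ H₂).Nonempty := by
        rcases hadj2.2 with ⟨_, h, _⟩ | ⟨_, h, hnonempty⟩
        · exact absurd h hFnotN
        · exact ⟨h, hnonempty⟩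
      have hG₀MN : G₀ ∈ M ∨ G₀ ∈ N := by
        rcases hside G₀ hG₀sup with h | h
        · exact Or.inl (Finset.mem_sdiff.mp h).1
        · exact Or.inr (Finset.mem_sdiff.mp h).1
      exact matching_aux M N hM.2.2 hN.2.2 F H₁ H₂ G₀
        (Finset.mem_sdiff.mp hFM).1 (Finset.mem_sdiff.mp h1.1).1
        (Finset.mem_sdiff.mp h2.1).1 hne12 h1.2 h2.2 hG₀MN hG₀F hs1 hs2
    · -- F ∈ N \ M
      have hFnotM : F ∉ M \ N := fun h =>
        (Finset.mem_sdiff.mp h).2 (Finset.mem_sdiff.mp hFN).1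
      have h1 : H₁ ∈ M \ N ∧ (F ∩ H₁).Nonempty := by
        rcases hadj1.2 with ⟨h, _, _⟩ | ⟨h, _, hnonempty⟩
        · exact absurd h hFnotM
        · exact ⟨h, by rwa [Finset.inter_comm]⟩
      have h2 : H₂ ∈ M \ N ∧ (F ∩ H₂).Nonempty := by
        rcases hadj2.2 with ⟨h, _, hnonempty⟩ | ⟨h, _, _⟩
        · exact ⟨h, by rwa [Finset.inter_comm]⟩
        · exact absurd h hFnotM
      have hG₀MN : G₀ ∈ N ∨ G₀ ∈ M := by
        rcases hside G₀ hG₀sup with h | h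
        · exact Or.inr (Finset.mem_sdiff.mp h).1
        · exact Or.inl (Finset.mem_sdiff.mp h).1
      exact matching_aux N M hN.2.2 hM.2.2 F H₁ H₂ G₀
        (Finset.mem_sdiff.mp hFN).1 (Finset.mem_sdiff.mp h1.1).1
        (Finset.mem_sdiff.mp h2.1).1 hne12 h1.2 h2.2 hG₀MN hG₀F hs1 hs2
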